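/- Let A : ℝⁿ × ℝ → ℝⁿ and B, C : ℝⁿ × ℝ → ℝ be given coefficient functions. Suppose u : ℝⁿ × ℝ → ℝ is twice continuously differentiable in the spatial variables and continuously differentiable in time, and solves the homogeneous second-order PDE Δu = A·∇u + B·∂ₜu + C·u (all derivatives spatial except ∂ₜ). Suppose Γ : ℝⁿ × ℝ → ℝ is twice continuously differentiable in space, continuously differentiable in time, and harmonic in the spatial variables (Δ_x Γ(x,t) = 0 for all (x,t)). If the product Γ·u also solves the same PDE Δ(Γu) = A·∇(Γu) + B·∂ₜ(Γu) + C·(Γu), then at every point 2⟨∇Γ, ∇u⟩ = u·(A·∇Γ + B·∂ₜΓ). -/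

import Mathlib

open scoped InnerProductSpace

/-- Spatial partial derivative in the `i`-th coordinate direction of
`u : ℝⁿ × ℝ → ℝ` (time held fixed). -/
noncomputable def spderiv {n : ℕ} (i : Fin n) (u : EuclideanSpace ℝ (Fin n) × ℝ → ℝ)
    (p : EuclideanSpace ℝ (Fin n) × ℝ) : ℝ :=
  fderiv ℝ (fun y => u (y, p.2)) p.1 (EuclideanSpace.single i 1)

/-- Spatial gradient of `u : ℝⁿ × ℝ → ℝ` as a vector in `ℝⁿ`. -/
noncomputable def sgrad {n : ℕ} (u : EuclideanSpace ℝ (Fin n) × ℝ → ℝ)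
    (p : EuclideanSpace ℝ (Fin n) × ℝ) : EuclideanSpace ℝ (Fin n) :=
  (EuclideanSpace.equiv (Fin n) ℝ).symm fun i => spderiv i u p

/-- Spatial Laplacian of `u : ℝⁿ × ℝ → ℝ`: the sum of the second spatial
partial derivatives. -/
noncomputable def slap {n : ℕ} (u : EuclideanSpace ℝ (Fin n) × ℝ → ℝ)
    (p : EuclideanSpace ℝ (Fin n) × ℝ) : ℝ :=
  ∑ i, spderiv i (spderiv i u) p

/-- Partial derivative in the time (last) coordinate of `u : ℝⁿ × ℝ → ℝ`. -/
noncomputable def tderiv' {n : ℕ} (u : EuclideanSpace ℝ (Fin n) × ℝ → ℝ)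
    (p : EuclideanSpace ℝ (Fin n) × ℝ) : ℝ :=
  deriv (fun s => u (p.1, s)) p.2

/- Auxiliary: purely spatial partial derivative. -/
noncomputable def pd {n : ℕ} (i : Fin n) (F : EuclideanSpace ℝ (Fin n) → ℝ)
    (x : EuclideanSpace ℝ (Fin n)) : ℝ :=
  fderiv ℝ F x (EuclideanSpace.single i 1)

lemma pd_contDiff {n : ℕ} (i : Fin n) {F : EuclideanSpace ℝ (Fin n) → ℝ}
    (hF : ContDiff ℝ 2 F) : ContDiff ℝ 1 (pd i F) :=
  (hF.fderiv_right (by norm_num)).clm_apply contDiff_const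

lemma pd_mul {n : ℕ} (i : Fin n) {F G : EuclideanSpace ℝ (Fin n) → ℝ}
    {x : EuclideanSpace ℝ (Fin n)}
    (hF : DifferentiableAt ℝ F x) (hG : DifferentiableAt ℝ G x) :
    pd i (fun y => F y * G y) x = F x * pd i G x + G x * pd i F x := by
  unfold pd
  rw [fderiv_fun_mul hF hG]
  simp

lemma pd2_mul {n : ℕ} (i : Fin n) {F G : EuclideanSpace ℝ (Fin n) → ℝ}
    (hF : ContDiff ℝ 2 F) (hG : ContDiff ℝ 2 G) (x : EuclideanSpace ℝ (Fin n)) :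
    pd i (pd i (fun y => F y * G y)) x
      = F x * pd i (pd i G) x + G x * pd i (pd i F) x
        + 2 * (pd i F x * pd i G x) := by
  have h1 : pd i (fun y => F y * G y)
      = fun y => F y * pd i G y + G y * pd i F y := by
    funext y
    exact pd_mul i ((hF.differentiable (by norm_num)).differentiableAt)
      ((hG.differentiable (by norm_num)).differentiableAt)
  rw [h1]
  have dF : DifferentiableAt ℝ F x := (hF.differentiable (by norm_num)).differentiableAt
  have dG : DifferentiableAt ℝ G x := (hG.differentiable (by norm_num)).differentiableAt
  have dpF : DifferentiableAt ℝ (pd i F) x :=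
    ((pd_contDiff i hF).differentiable one_ne_zero).differentiableAt
  have dpG : DifferentiableAt ℝ (pd i G) x :=
    ((pd_contDiff i hG).differentiable one_ne_zero).differentiableAt
  show fderiv ℝ (fun y => F y * pd i G y + G y * pd i F y) x (EuclideanSpace.single i 1) = _
  rw [fderiv_fun_add (f := fun y => F y * pd i G y) (g := fun y => G y * pd i F y) (dF.mul dpG) (dG.mul dpF), fderiv_fun_mul dF dpG, fderiv_fun_mul dG dpF]
  simp [pd]
  ring

lemma spderiv_eq_pd {n : ℕ} (i : Fin n) (f : EuclideanSpace ℝ (Fin n) × ℝ → ℝ)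
    (p : EuclideanSpace ℝ (Fin n) × ℝ) :
    spderiv i f p = pd i (fun y => f (y, p.2)) p.1 := rfl

lemma spderiv2_eq_pd2 {n : ℕ} (i : Fin n) (f : EuclideanSpace ℝ (Fin n) × ℝ → ℝ)
    (p : EuclideanSpace ℝ (Fin n) × ℝ) :
    spderiv i (spderiv i f) p = pd i (pd i (fun y => f (y, p.2))) p.1 := rfl

lemma inner_sgrad {n : ℕ} (v : EuclideanSpace ℝ (Fin n))
    (f : EuclideanSpace ℝ (Fin n) × ℝ → ℝ) (p : EuclideanSpace ℝ (Fin n) × ℝ) :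
    ⟪v, sgrad f p⟫_ℝ = ∑ i, v i * spderiv i f p := by
  simp [sgrad, PiLp.inner_apply, EuclideanSpace.equiv]
  exact Finset.sum_congr rfl fun _ _ => mul_comm _ _

/-- Harmonic reduction identity (Theorem 0.1, linear case): if `u` and `Γ·u`
both solve `Δu = A·∇u + B ∂ₜu + C u`, with `Γ` spatially harmonic, then
`2⟨∇Γ, ∇u⟩ = u (A·∇Γ + B ∂ₜΓ)`. -/
theorem harmonic_reduction {n : ℕ}
    (A : EuclideanSpace ℝ (Fin n) × ℝ → EuclideanSpace ℝ (Fin n))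
    (B C : EuclideanSpace ℝ (Fin n) × ℝ → ℝ)
    (u Γ : EuclideanSpace ℝ (Fin n) × ℝ → ℝ)
    (hu_space : ∀ t, ContDiff ℝ 2 fun x => u (x, t))
    (hu_time : ∀ x, ContDiff ℝ 1 fun t => u (x, t))
    (hΓ_space : ∀ t, ContDiff ℝ 2 fun x => Γ (x, t))
    (hΓ_time : ∀ x, ContDiff ℝ 1 fun t => Γ (x, t))
    (hharm : ∀ p, slap Γ p = 0)
    (hPDE : ∀ p, slap u p
      = ⟪A p, sgrad u p⟫_ℝ + B p * tderiv' u p + C p * u p)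
    (hPDE' : ∀ p, slap (fun q => Γ q * u q) p
      = ⟪A p, sgrad (fun q => Γ q * u q) p⟫_ℝ
        + B p * tderiv' (fun q => Γ q * u q) p + C p * (Γ p * u p)) :
    ∀ p, 2 * ⟪sgrad Γ p, sgrad u p⟫_ℝ
      = u p * (⟪A p, sgrad Γ p⟫_ℝ + B p * tderiv' Γ p) := by
  intro p
  -- pointwise product rule for spatial partials
  have hsp : ∀ (i : Fin n) (q : EuclideanSpace ℝ (Fin n) × ℝ),
      spderiv i (fun q => Γ q * u q) q
        = Γ q * spderiv i u q + u q * spderiv i Γ q := by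
    intro i q
    rw [spderiv_eq_pd, spderiv_eq_pd, spderiv_eq_pd]
    exact pd_mul i (((hΓ_space q.2).differentiable (by norm_num)).differentiableAt)
      (((hu_space q.2).differentiable (by norm_num)).differentiableAt)
  -- second spatial partials of the product
  have hsp2 : ∀ i : Fin n,
      spderiv i (spderiv i (fun q => Γ q * u q)) p
        = Γ p * spderiv i (spderiv i u) p + u p * spderiv i (spderiv i Γ) p
          + 2 * (spderiv i Γ p * spderiv i u p) := by
    intro i
    rw [spderiv2_eq_pd2, spderiv2_eq_pd2, spderiv2_eq_pd2,
      spderiv_eq_pd, spderiv_eq_pd]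
    exact pd2_mul i (hΓ_space p.2) (hu_space p.2) p.1
  -- laplacian of the product
  have hslap : slap (fun q => Γ q * u q) p
      = Γ p * slap u p + u p * slap Γ p
        + 2 * ∑ i, spderiv i Γ p * spderiv i u p := by
    unfold slap
    rw [Finset.sum_congr rfl fun i _ => hsp2 i]
    rw [Finset.sum_add_distrib, Finset.sum_add_distrib, ← Finset.mul_sum,
      ← Finset.mul_sum, ← Finset.mul_sum]
  -- time derivative of the product
  have htd : tderiv' (fun q => Γ q * u q) p
      = Γ p * tderiv' u p + u p * tderiv' Γ p := by
    unfold tderiv'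
    beta_reduce
    rw [deriv_fun_mul (((hΓ_time p.1).differentiable one_ne_zero).differentiableAt)
      (((hu_time p.1).differentiable one_ne_zero).differentiableAt)]
    ring
  -- inner product with A of the gradient of the product
  have hinner : ⟪A p, sgrad (fun q => Γ q * u q) p⟫_ℝ
      = Γ p * ⟪A p, sgrad u p⟫_ℝ + u p * ⟪A p, sgrad Γ p⟫_ℝ := by
    rw [inner_sgrad, inner_sgrad, inner_sgrad, Finset.mul_sum, Finset.mul_sum,
      ← Finset.sum_add_distrib]
    refine Finset.sum_congr rfl fun i _ => ?_
    rw [hsp i p]; ring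
  have h1 := hPDE p
  have h2 := hPDE' p
  rw [hslap, htd, hinner, hharm p] at h2
  have hgg : ⟪sgrad Γ p, sgrad u p⟫_ℝ = ∑ i, spderiv i Γ p * spderiv i u p := by
    rw [inner_sgrad]
    exact Finset.sum_congr rfl fun i _ => by simp [sgrad, EuclideanSpace.equiv]
  rw [hgg]
  linear_combination h2 - Γ p * h1
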